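/- Let N ∈ {2,3} and μ₂ ≥ μ₁ > 0. If either (κ > 1 and β ≥ −(μ₁²μ₂)^{1/3}) or (κ = 1 and β > 0), then system (1) has no opposite sign classical H¹ solution: there is no classical H¹ solution (u,v) of system (1) such that either (u(x) > 0 and v(x) < 0 for all x) or (u(x) < 0 and v(x) > 0 for all x). -/

import Mathlib

open MeasureTheory

noncomputable def laplacian {N : ℕ} (u : EuclideanSpace ℝ (Fin N) → ℝ)
    (x : EuclideanSpace ℝ (Fin N)) : ℝ :=
  ∑ i, iteratedFDeriv ℝ 2 u x ![EuclideanSpace.single i 1, EuclideanSpace.single i 1]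

variable {N : ℕ}
local notation "E" => EuclideanSpace ℝ (Fin N)

lemma laplacian_smul_sub {a b : E → ℝ} {x : E} (c : ℝ)
    (ha : ContDiffAt ℝ 2 a x) (hb : ContDiffAt ℝ 2 b x) :
    laplacian (fun y => a y - c * b y) x = laplacian a x - c * laplacian b x := by
  have hev : fderiv ℝ (fun y => a y - c * b y)
      =ᶠ[nhds x] fun y => fderiv ℝ a y - c • fderiv ℝ b y := by
    filter_upwards [ha.eventually (by simp), hb.eventually (by simp)] with y hay hby
    have h1 : DifferentiableAt ℝ a y := hay.differentiableAt two_ne_zero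
    have h2 : DifferentiableAt ℝ b y := hby.differentiableAt two_ne_zero
    rw [fderiv_fun_sub h1 (h2.const_mul c), fderiv_const_mul h2 c]
  have hda : DifferentiableAt ℝ (fderiv ℝ a) x :=
    (ha.fderiv_right (m := 1) (by norm_num)).differentiableAt one_ne_zero
  have hdb : DifferentiableAt ℝ (fderiv ℝ b) x :=
    (hb.fderiv_right (m := 1) (by norm_num)).differentiableAt one_ne_zero
  have key : fderiv ℝ (fderiv ℝ (fun y => a y - c * b y)) x
      = fderiv ℝ (fderiv ℝ a) x - c • fderiv ℝ (fderiv ℝ b) x := by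
    rw [hev.fderiv_eq, fderiv_fun_sub (g := fun y => c • fderiv ℝ b y) hda (hdb.const_smul c), fderiv_fun_const_smul hdb c]
  unfold laplacian
  rw [Finset.mul_sum, ← Finset.sum_sub_distrib]
  refine Finset.sum_congr rfl fun i _ => ?_
  rw [iteratedFDeriv_two_apply, iteratedFDeriv_two_apply, iteratedFDeriv_two_apply, key]
  simp

lemma second_deriv_nonneg_of_isLocalMin {g : ℝ → ℝ} (hg : ContDiffAt ℝ 2 g 0)
    (hmin : IsLocalMin g 0) : 0 ≤ deriv (deriv g) 0 := by
  by_contra hcon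
  push_neg at hcon
  set d := deriv (deriv g) 0 with hd
  have hd1 : deriv g 0 = 0 := hmin.deriv_eq_zero
  have hdg : ContDiffAt ℝ 1 (deriv g) 0 := by
    have h1 : ContDiffAt ℝ 1 (fderiv ℝ g) 0 := hg.fderiv_right (m := 1) (by norm_num)
    have : ContDiffAt ℝ 1 (fun t => fderiv ℝ g t 1) 0 := h1.clm_apply contDiffAt_const
    have heq : (deriv g) = fun t => fderiv ℝ g t 1 := by
      funext t; rfl
    rwa [heq]
  have hDa : HasDerivAt (deriv g) d 0 := (hdg.differentiableAt one_ne_zero).hasDerivAt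
  have hslope : Filter.Tendsto (slope (deriv g) 0) (nhdsWithin 0 {(0:ℝ)}ᶜ) (nhds d) :=
    hasDerivAt_iff_tendsto_slope.mp hDa
  have hev1 : ∀ᶠ t in nhdsWithin (0:ℝ) (Set.Ioi 0), deriv g t < 0 := by
    have h2 : ∀ᶠ t in nhdsWithin (0:ℝ) {(0:ℝ)}ᶜ, slope (deriv g) 0 t < d / 2 :=
      hslope.eventually (Iio_mem_nhds (by linarith))
    have h3 : ∀ᶠ t in nhdsWithin (0:ℝ) (Set.Ioi 0), slope (deriv g) 0 t < d / 2 :=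
      h2.filter_mono (nhdsWithin_mono 0 (fun t ht => ne_of_gt ht))
    filter_upwards [h3, self_mem_nhdsWithin] with t ht ht0
    rw [Set.mem_Ioi] at ht0
    have h4 : t⁻¹ * deriv g t < d / 2 := by
      have : slope (deriv g) 0 t = t⁻¹ * deriv g t := by simp [slope, hd1]
      rwa [this] at ht
    have h5 : t * (t⁻¹ * deriv g t) < t * (d / 2) := mul_lt_mul_of_pos_left h4 ht0
    rw [mul_inv_cancel_left₀ (ne_of_gt ht0)] at h5
    nlinarith
  obtain ⟨δ₂, hδ₂pos, hδ₂⟩ : ∃ δ > (0:ℝ), ∀ t ∈ Set.Ioo 0 δ, deriv g t < 0 := by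
    rw [Filter.eventually_iff, mem_nhdsGT_iff_exists_Ioo_subset] at hev1
    obtain ⟨u, hu, hsub⟩ := hev1
    exact ⟨u, hu, fun t ht => hsub ht⟩
  have hevS : ∀ᶠ t in nhds (0:ℝ), ContDiffAt ℝ 2 g t := hg.eventually (by simp)
  rw [Metric.eventually_nhds_iff] at hevS
  obtain ⟨δ₁, hδ₁pos, hδ₁⟩ := hevS
  have hminev := hmin
  rw [IsLocalMin, IsMinFilter, Metric.eventually_nhds_iff] at hminev
  obtain ⟨δ₃, hδ₃pos, hδ₃⟩ := hminev
  set t₀ : ℝ := (min δ₁ (min δ₂ δ₃)) / 2 with ht₀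
  have ht₀pos : 0 < t₀ := by positivity
  have ht₀1 : t₀ < δ₁ := by
    have : min δ₁ (min δ₂ δ₃) ≤ δ₁ := min_le_left _ _
    linarith
  have ht₀2 : t₀ < δ₂ := by
    have : min δ₁ (min δ₂ δ₃) ≤ δ₂ := le_trans (min_le_right _ _) (min_le_left _ _)
    linarith
  have ht₀3 : t₀ < δ₃ := by
    have : min δ₁ (min δ₂ δ₃) ≤ δ₃ := le_trans (min_le_right _ _) (min_le_right _ _)
    linarith
  have hanti : StrictAntiOn g (Set.Icc 0 t₀) := by
    apply strictAntiOn_of_deriv_neg (convex_Icc 0 t₀)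
    · intro t ht
      have : dist t 0 < δ₁ := by
        rw [Real.dist_eq, sub_zero, abs_of_nonneg ht.1]
        linarith [ht.2]
      exact ((hδ₁ this).continuousAt.continuousWithinAt)
    · intro t ht
      rw [interior_Icc] at ht
      exact hδ₂ t ⟨ht.1, lt_trans ht.2 ht₀2⟩
  have h1 : g t₀ < g 0 := hanti (Set.left_mem_Icc.mpr ht₀pos.le)
    (Set.right_mem_Icc.mpr ht₀pos.le) ht₀pos
  have h2 : g 0 ≤ g t₀ := by
    apply hδ₃
    rw [Real.dist_eq, sub_zero, abs_of_pos ht₀pos]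
    linarith
  linarith

/-- second derivative along a line -/
lemma line_second_deriv {f : E → ℝ} {x : E} (hf : ContDiffAt ℝ 2 f x) (e : E) :
    iteratedFDeriv ℝ 2 f x ![e, e] = deriv (deriv (fun t : ℝ => f (x + t • e))) 0 := by
  have hline : ∀ t : ℝ, HasDerivAt (fun s : ℝ => x + s • e) e t := by
    intro t
    simpa using ((hasDerivAt_id t).smul_const e).const_add x
  have hev : ∀ᶠ y in nhds x, ContDiffAt ℝ 2 f y := hf.eventually (by simp)
  have hcont : Continuous (fun t : ℝ => x + t • e) := by fun_prop
  have hev' : ∀ᶠ t in nhds (0:ℝ), ContDiffAt ℝ 2 f (x + t • e) := by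
    have h0 : Filter.Tendsto (fun t : ℝ => x + t • e) (nhds 0) (nhds x) := by
      have := hcont.continuousAt (x := (0:ℝ))
      rwa [ContinuousAt, zero_smul, add_zero] at this
    exact h0.eventually hev
  have hderiv : ∀ᶠ t in nhds (0:ℝ),
      deriv (fun s : ℝ => f (x + s • e)) t = fderiv ℝ f (x + t • e) e := by
    filter_upwards [hev'] with t ht
    have : HasDerivAt (fun s : ℝ => f (x + s • e)) (fderiv ℝ f (x + t • e) e) t := by
      have hdf : DifferentiableAt ℝ f (x + t • e) := ht.differentiableAt two_ne_zero
      exact hdf.hasFDerivAt.comp_hasDerivAt t (hline t)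
    exact this.deriv
  rw [iteratedFDeriv_two_apply]
  have h1 : HasDerivAt (fun t : ℝ => fderiv ℝ f (x + t • e))
      (fderiv ℝ (fderiv ℝ f) x e) 0 := by
    have hd : DifferentiableAt ℝ (fderiv ℝ f) x :=
      (hf.fderiv_right (m := 1) (by norm_num)).differentiableAt one_ne_zero
    have hx0 : x + (0:ℝ) • e = x := by simp
    have := (hx0 ▸ hd.hasFDerivAt).comp_hasDerivAt 0 (hline 0)
    simpa [hx0, Function.comp_def] using this
  have h2 : HasDerivAt (fun t : ℝ => fderiv ℝ f (x + t • e) e)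
      (fderiv ℝ (fderiv ℝ f) x e e) 0 := by
    have := h1.clm_apply (hasDerivAt_const 0 e)
    simpa using this
  have heq : (deriv (fun s : ℝ => f (x + s • e)))
      =ᶠ[nhds (0:ℝ)] (fun t => fderiv ℝ f (x + t • e) e) := hderiv
  rw [heq.deriv_eq, h2.deriv]
  simp [Matrix.cons_val_zero, Matrix.cons_val_one]

lemma laplacian_eq_sum {f : E → ℝ} {x : E} (hf : ContDiffAt ℝ 2 f x) :
    laplacian f x
      = ∑ i, deriv (deriv (fun t : ℝ => f (x + t • (EuclideanSpace.single i 1)))) 0 :=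
  Finset.sum_congr rfl fun i _ => line_second_deriv hf _

lemma laplacian_nonneg_of_isLocalMin {f : E → ℝ} {x : E} (hf : ContDiffAt ℝ 2 f x)
    (hmin : IsLocalMin f x) : 0 ≤ laplacian f x := by
  rw [laplacian_eq_sum hf]
  apply Finset.sum_nonneg
  intro i _
  set e : EuclideanSpace ℝ (Fin N) := EuclideanSpace.single i 1
  have hline : ContDiff ℝ 2 (fun t : ℝ => x + t • e) :=
    contDiff_const.add (contDiff_id.smul contDiff_const)
  have hg : ContDiffAt ℝ 2 (fun t : ℝ => f (x + t • e)) 0 := by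
    have hfx : ContDiffAt ℝ 2 f ((fun t : ℝ => x + t • e) 0) := by simpa using hf
    exact hfx.comp 0 hline.contDiffAt
  apply second_deriv_nonneg_of_isLocalMin hg
  have h0 : Filter.Tendsto (fun t : ℝ => x + t • e) (nhds 0) (nhds x) := by
    have hcont : Continuous (fun t : ℝ => x + t • e) := by fun_prop
    have := hcont.continuousAt (x := (0:ℝ))
    rwa [ContinuousAt, zero_smul, add_zero] at this
  have : ∀ᶠ t in nhds (0:ℝ), f x ≤ f (x + t • e) := h0.eventually hmin
  simpa [IsLocalMin, IsMinFilter] using this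

/-- The key touching-point comparison. -/
lemma touching {w φ : E → ℝ} {K : Set E} {x₀ : E}
    (hw : ContDiffAt ℝ 2 w x₀) (hφ : ContDiffAt ℝ 2 φ x₀)
    (hwpos : ∀ x, 0 < w x)
    (hmax : IsMaxOn (fun x => φ x / w x) K x₀)
    (hK : K ∈ nhds x₀) (hφpos : 0 < φ x₀) :
    (w x₀ / φ x₀) * laplacian φ x₀ ≤ laplacian w x₀ := by
  set t := w x₀ / φ x₀ with htdef
  have ht : 0 < t := div_pos (hwpos x₀) hφpos
  have hmin : IsLocalMin (fun x => w x - t * φ x) x₀ := by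
    have hminOn : IsMinOn (fun x => w x - t * φ x) K x₀ := by
      intro x hx
      have h1 : φ x / w x ≤ φ x₀ / w x₀ := hmax hx
      have h2 : φ x * w x₀ ≤ φ x₀ * w x :=
        (div_le_div_iff₀ (hwpos x) (hwpos x₀)).mp h1
      have h3 : t * φ x ≤ w x := by
        rw [htdef, div_mul_eq_mul_div, div_le_iff₀ hφpos]
        nlinarith
      have h4 : w x₀ - t * φ x₀ = 0 := by
        rw [htdef]
        field_simp
        ring
      show w x₀ - t * φ x₀ ≤ w x - t * φ x
      linarith
    exact hminOn.isLocalMin hK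
  have h0 := laplacian_nonneg_of_isLocalMin ((hw.sub (hφ.const_smul t)) :
      ContDiffAt ℝ 2 (fun x => w x - t * φ x) x₀) hmin
  rw [laplacian_smul_sub t hw hφ] at h0
  linarith

lemma norm_line_sq (x : E) (i : Fin N) (t : ℝ) :
    ‖x + t • (EuclideanSpace.single i (1:ℝ))‖ ^ 2 = ‖x‖ ^ 2 + 2 * (x i) * t + t ^ 2 := by
  rw [norm_add_sq_real]
  rw [real_inner_smul_right]
  rw [EuclideanSpace.inner_single_right]
  rw [norm_smul, EuclideanSpace.norm_single]
  simp [Real.norm_eq_abs, mul_pow, sq_abs]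
  ring

lemma sum_sq_eq_norm_sq (x : E) : ∑ i, (x i) ^ 2 = ‖x‖ ^ 2 := by
  rw [EuclideanSpace.norm_eq, Real.sq_sqrt]
  · exact Finset.sum_congr rfl fun i _ => by simp [Real.norm_eq_abs, sq_abs]
  · positivity

lemma laplacian_barrier1 (R : ℝ) (x : E) :
    laplacian (fun y : E => (R ^ 2 - ‖y‖ ^ 2) ^ 2) x
      = 8 * ‖x‖ ^ 2 - 4 * N * (R ^ 2 - ‖x‖ ^ 2) := by
  have hC : ContDiffAt ℝ 2 (fun y : E => (R ^ 2 - ‖y‖ ^ 2) ^ 2) x :=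
    ((contDiff_const.sub (contDiff_norm_sq ℝ)).pow 2).contDiffAt
  rw [laplacian_eq_sum hC]
  have key : ∀ i : Fin N, deriv (deriv (fun t : ℝ =>
      (R ^ 2 - ‖x + t • (EuclideanSpace.single i (1:ℝ))‖ ^ 2) ^ 2)) 0
      = 8 * (x i) ^ 2 - 4 * (R ^ 2 - ‖x‖ ^ 2) := by
    intro i
    have hfun : (fun t : ℝ => (R ^ 2 - ‖x + t • (EuclideanSpace.single i (1:ℝ))‖ ^ 2) ^ 2)
        = fun t : ℝ => ((R ^ 2 - ‖x‖ ^ 2) - 2 * (x i) * t - t ^ 2) ^ 2 := by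
      funext t; rw [norm_line_sq]; ring
    rw [hfun]
    set C := R ^ 2 - ‖x‖ ^ 2 with hCdef
    set b := x i with hbdef
    have hinner : ∀ t : ℝ, HasDerivAt (fun t : ℝ => C - 2 * b * t - t ^ 2)
        (-(2 * b) - 2 * t) t := by
      intro t
      have h1 : HasDerivAt (fun t : ℝ => C - 2 * b * t) (-(2 * b)) t := by
        simpa using ((hasDerivAt_id t).const_mul (2 * b)).const_sub C
      have h2 : HasDerivAt (fun t : ℝ => t ^ 2) (2 * t) t := by
        simpa using (hasDerivAt_id t).fun_pow 2
      simpa using h1.fun_sub h2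
    have hd1 : ∀ t : ℝ, HasDerivAt (fun t : ℝ => (C - 2 * b * t - t ^ 2) ^ 2)
        (2 * (C - 2 * b * t - t ^ 2) * (-(2 * b) - 2 * t)) t := by
      intro t
      have := (hinner t).fun_pow 2
      convert this using 1
      · rfl
      · rfl
      · ring
    have hderiv1 : deriv (fun t : ℝ => (C - 2 * b * t - t ^ 2) ^ 2)
        = fun t => 2 * (C - 2 * b * t - t ^ 2) * (-(2 * b) - 2 * t) :=
      funext fun t => (hd1 t).deriv
    rw [hderiv1]
    have h2' : HasDerivAt (fun t : ℝ => -(2 * b) - 2 * t) (-2) 0 := by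
      simpa using ((hasDerivAt_id (0:ℝ)).const_mul 2).const_sub (-(2 * b))
    have h1' : HasDerivAt (fun t : ℝ => 2 * (C - 2 * b * t - t ^ 2))
        (2 * (-(2 * b) - 2 * 0)) 0 := (hinner 0).const_mul 2
    have hd2 := (h1'.fun_mul h2').deriv
    rw [hd2]
    ring
  rw [Finset.sum_congr rfl fun i _ => key i]
  rw [Finset.sum_sub_distrib, ← Finset.mul_sum, sum_sq_eq_norm_sq]
  simp [Finset.card_univ]
  ring

lemma no_supersolution {w : E → ℝ} {c : ℝ} (hc : 0 < c) (hw : ContDiff ℝ 2 w)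
    (hwpos : ∀ x, 0 < w x) (hsup : ∀ x, c * w x ≤ -laplacian w x) : False := by
  set R : ℝ := Real.sqrt (((4 * N + 8) ^ 2 + 1) / (32 * c)) with hRdef
  have hR2 : R ^ 2 = ((4 * (N:ℝ) + 8) ^ 2 + 1) / (32 * c) := Real.sq_sqrt (by positivity)
  have hRpos : 0 < R := Real.sqrt_pos.mpr (by positivity)
  set φ : E → ℝ := fun y => (R ^ 2 - ‖y‖ ^ 2) ^ 2 with hφdef
  have hφC : ContDiff ℝ 2 φ := (contDiff_const.sub (contDiff_norm_sq ℝ)).pow 2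
  have hK : IsCompact (Metric.closedBall (0:E) R) := isCompact_closedBall 0 R
  have hne : (Metric.closedBall (0:E) R).Nonempty := ⟨0, by simp [hRpos.le]⟩
  obtain ⟨x₀, hx₀K, hx₀max⟩ := hK.exists_isMaxOn hne
    ((hφC.continuous.continuousOn).div (hw.continuous.continuousOn)
      (fun x _ => (hwpos x).ne'))
  have hρ0 : φ 0 / w 0 ≤ φ x₀ / w x₀ := hx₀max (by simp [hRpos.le])
  have hφ0 : 0 < φ 0 := by
    have : φ 0 = (R ^ 2) ^ 2 := by simp [hφdef]
    rw [this]; positivity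
  have hρpos : 0 < φ x₀ / w x₀ := lt_of_lt_of_le (div_pos hφ0 (hwpos 0)) hρ0
  have hφx₀ : 0 < φ x₀ := by
    by_contra h
    push_neg at h
    have : φ x₀ / w x₀ ≤ 0 := div_nonpos_iff.mpr (Or.inr ⟨h, (hwpos x₀).le⟩)
    linarith [this]
  have hxlt : ‖x₀‖ < R := by
    have h1 : ‖x₀‖ ≤ R := mem_closedBall_zero_iff.mp hx₀K
    rcases lt_or_eq_of_le h1 with h | h
    · exact h
    · exfalso
      have : φ x₀ = 0 := by rw [hφdef]; simp [h]
      linarith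
  have hKnhds : Metric.closedBall (0:E) R ∈ nhds x₀ := by
    rw [← mem_interior_iff_mem_nhds, interior_closedBall (0:E) hRpos.ne']
    exact mem_ball_zero_iff.mpr hxlt
  have htouch := touching hw.contDiffAt hφC.contDiffAt hwpos hx₀max hKnhds hφx₀
  rw [laplacian_barrier1 R x₀] at htouch
  have hlapw : laplacian w x₀ ≤ -(c * w x₀) := by linarith [hsup x₀]
  set s := R ^ 2 - ‖x₀‖ ^ 2 with hsdef
  have hs0 : 0 < s := by
    have := sq_lt_sq' (by linarith [norm_nonneg x₀, hRpos] : -R < ‖x₀‖) hxlt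
    rw [hsdef]; nlinarith [norm_nonneg x₀]
  have hφx₀eq : φ x₀ = s ^ 2 := rfl
  set t := w x₀ / φ x₀ with htdef
  have htpos : 0 < t := div_pos (hwpos x₀) hφx₀
  have hwx₀ : w x₀ = t * s ^ 2 := by
    rw [htdef, hφx₀eq]; field_simp
  have hnorm : ‖x₀‖ ^ 2 = R ^ 2 - s := by rw [hsdef]; ring
  rw [hnorm] at htouch
  have hmain : 8 * (R ^ 2 - s) - 4 * N * s ≤ -(c * s ^ 2) := by
    have h2 : t * (8 * (R ^ 2 - s) - 4 * N * s) ≤ -(c * (t * s ^ 2)) := by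
      calc t * (8 * (R ^ 2 - s) - 4 * N * s) ≤ laplacian w x₀ := htouch
        _ ≤ -(c * w x₀) := hlapw
        _ = -(c * (t * s ^ 2)) := by rw [hwx₀]
    nlinarith [htpos]
  have h32 : 32 * c * R ^ 2 = (4 * (N:ℝ) + 8) ^ 2 + 1 := by
    rw [hR2]; field_simp
  nlinarith [sq_nonneg (2 * c * s - (4 * (N:ℝ) + 8)), mul_pos hc hs0, h32,
    mul_le_mul_of_nonneg_left hmain (by linarith : (0:ℝ) ≤ 4 * c)]

lemma rpow_neg_anti {α a b : ℝ} (ha : 0 < a) (hab : a ≤ b) (hα : 0 ≤ α) :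
    b ^ (-α) ≤ a ^ (-α) := by
  have hb : 0 < b := lt_of_lt_of_le ha hab
  rw [Real.rpow_neg ha.le, Real.rpow_neg hb.le]
  exact inv_anti₀ (Real.rpow_pos_of_pos ha α) (Real.rpow_le_rpow ha.le hab hα)

lemma rpow_neg_anti_strict {α a b : ℝ} (ha : 0 < a) (hab : a < b) (hα : 0 < α) :
    b ^ (-α) < a ^ (-α) := by
  have hb : 0 < b := lt_trans ha hab
  rw [Real.rpow_neg ha.le, Real.rpow_neg hb.le]
  exact inv_strictAnti₀ (Real.rpow_pos_of_pos ha α) (Real.rpow_lt_rpow ha.le hab hα)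

lemma barrier2_contDiffAt {α c₀ : ℝ} {x : E} (hx : x ≠ 0) :
    ContDiffAt ℝ 2 (fun y : E => (‖y‖ ^ 2) ^ (-α) - c₀) x := by
  have hx' : (0:ℝ) < ‖x‖ := norm_pos_iff.mpr hx
  have h1 : ContDiffAt ℝ 2 (fun s : ℝ => s ^ (-α)) (‖x‖ ^ 2) :=
    Real.contDiffAt_rpow_const_of_ne (by positivity)
  exact (h1.comp x (contDiff_norm_sq ℝ).contDiffAt).sub contDiffAt_const

lemma laplacian_barrier2 {α c₀ : ℝ} {x : E} (hx : x ≠ 0) :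
    laplacian (fun y : E => (‖y‖ ^ 2) ^ (-α) - c₀) x
      = 2 * α * (2 * α + 2 - N) * (‖x‖ ^ 2) ^ (-α - 1) := by
  have hx' : (0:ℝ) < ‖x‖ := norm_pos_iff.mpr hx
  have hC : (0:ℝ) < ‖x‖ ^ 2 := by positivity
  rw [laplacian_eq_sum (barrier2_contDiffAt hx)]
  have key : ∀ i : Fin N, deriv (deriv (fun t : ℝ =>
      (‖x + t • (EuclideanSpace.single i (1:ℝ))‖ ^ 2) ^ (-α) - c₀)) 0
      = 4 * α * (α + 1) * (‖x‖ ^ 2) ^ (-α - 2) * (x i) ^ 2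
        - 2 * α * (‖x‖ ^ 2) ^ (-α - 1) := by
    intro i
    set b := x i with hbdef
    set q : ℝ → ℝ := fun t => ‖x‖ ^ 2 + 2 * b * t + t ^ 2 with hqdef
    have hfun : (fun t : ℝ => (‖x + t • (EuclideanSpace.single i (1:ℝ))‖ ^ 2) ^ (-α) - c₀)
        = fun t : ℝ => (q t) ^ (-α) - c₀ := by
      funext t; rw [norm_line_sq]
    rw [hfun]
    have hq : ∀ t : ℝ, HasDerivAt q (2 * b + 2 * t) t := by
      intro t
      have h1 : HasDerivAt (fun t : ℝ => ‖x‖ ^ 2 + 2 * b * t) (2 * b) t := by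
        simpa using ((hasDerivAt_id t).const_mul (2 * b)).const_add (‖x‖ ^ 2)
      have h2 : HasDerivAt (fun t : ℝ => t ^ 2) (2 * t) t := by
        simpa using (hasDerivAt_id t).fun_pow 2
      simpa using h1.fun_add h2
    have hq0 : q 0 = ‖x‖ ^ 2 := by simp [hqdef]
    have hqpos : ∀ᶠ t in nhds (0:ℝ), 0 < q t := by
      have hcq : Continuous q := by fun_prop
      have : Filter.Tendsto q (nhds 0) (nhds (q 0)) := hcq.continuousAt
      rw [hq0] at this
      exact this.eventually (eventually_gt_nhds hC)
    have hDq : ∀ t : ℝ, 0 < q t → HasDerivAt (fun t : ℝ => (q t) ^ (-α) - c₀)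
        ((-α) * (q t) ^ (-α - 1) * (2 * b + 2 * t)) t := by
      intro t ht
      have h1 : HasDerivAt (fun s : ℝ => s ^ (-α)) ((-α) * (q t) ^ (-α - 1)) (q t) :=
        Real.hasDerivAt_rpow_const (Or.inl ht.ne')
      have := h1.comp t (hq t)
      simpa [mul_comm, mul_assoc] using this.sub_const c₀
    have hev : deriv (fun t : ℝ => (q t) ^ (-α) - c₀)
        =ᶠ[nhds (0:ℝ)] fun t => (-α) * (q t) ^ (-α - 1) * (2 * b + 2 * t) := by
      filter_upwards [hqpos] with t ht
      exact (hDq t ht).deriv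
    rw [hev.deriv_eq]
    have hA : HasDerivAt (fun t : ℝ => (-α) * (q t) ^ (-α - 1))
        ((-α) * ((-α - 1) * (‖x‖ ^ 2) ^ (-α - 2) * (2 * b + 2 * 0))) 0 := by
      have h1 : HasDerivAt (fun s : ℝ => s ^ (-α - 1)) ((-α - 1) * (‖x‖ ^ 2) ^ (-α - 1 - 1)) (‖x‖ ^ 2) :=
        Real.hasDerivAt_rpow_const (Or.inl hC.ne')
      have h2 := (hq0 ▸ h1).comp 0 (hq 0)
      have h3 := h2.const_mul (-α)
      have he : (-α - 1 - 1 : ℝ) = -α - 2 := by ring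
      simp only [hq0, he] at h3
      exact h3
    have hB : HasDerivAt (fun t : ℝ => 2 * b + 2 * t) 2 0 := by
      simpa using ((hasDerivAt_id (0:ℝ)).const_mul 2).const_add (2 * b)
    have hAB := (hA.fun_mul hB).deriv
    rw [hAB]
    have hsplit : (‖x‖ ^ 2 : ℝ) ^ (-α - 1) = (‖x‖ ^ 2) ^ (-α - 2) * ‖x‖ ^ 2 := by
      rw [show (-α - 1 : ℝ) = (-α - 2) + 1 by ring, Real.rpow_add_one hC.ne']
    simp only [hq0]
    rw [hsplit]
    ring
  rw [Finset.sum_congr rfl fun i _ => key i]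
  rw [Finset.sum_sub_distrib, ← Finset.mul_sum, sum_sq_eq_norm_sq]
  have hsplit : (‖x‖ ^ 2 : ℝ) ^ (-α - 1) = (‖x‖ ^ 2) ^ (-α - 2) * ‖x‖ ^ 2 := by
    rw [show (-α - 1 : ℝ) = (-α - 2) + 1 by ring, Real.rpow_add_one hC.ne']
  simp [Finset.card_univ]
  rw [hsplit]
  ring

lemma lower_bound_annulus (hNpos : 0 < N) {w : E → ℝ} (hw : ContDiff ℝ 2 w)
    (hwpos : ∀ x, 0 < w x) (hlap : ∀ x, laplacian w x < 0)
    {α : ℝ} (hα : 0 < α) (hαN : (N:ℝ) < 2 * α + 2)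
    {m : ℝ} (hmin : ∀ y : E, ‖y‖ = 1 → m ≤ w y)
    {R : ℝ} (hR : 1 < R) :
    ∀ x : E, 1 ≤ ‖x‖ → ‖x‖ ≤ R → m * ((‖x‖ ^ 2) ^ (-α) - (R ^ 2) ^ (-α)) ≤ w x := by
  set c₀ : ℝ := (R ^ 2) ^ (-α) with hc₀
  set ψ : E → ℝ := fun y => (‖y‖ ^ 2) ^ (-α) - c₀ with hψdef
  set A : Set E := Metric.closedBall 0 R \ Metric.ball 0 1 with hAdef
  have hAC : IsCompact A := (isCompact_closedBall 0 R).diff Metric.isOpen_ball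
  have hmem : ∀ {y : E}, y ∈ A → 1 ≤ ‖y‖ ∧ ‖y‖ ≤ R := by
    intro y hy
    exact ⟨not_lt.mp (fun h => hy.2 (mem_ball_zero_iff.mpr h)),
      mem_closedBall_zero_iff.mp hy.1⟩
  have hψ0 : ∀ {y : E}, y ∈ A → 0 ≤ ψ y := by
    intro y hy
    have h1 : (0:ℝ) < ‖y‖ ^ 2 := by nlinarith [(hmem hy).1]
    have h2 : ‖y‖ ^ 2 ≤ R ^ 2 := by nlinarith [(hmem hy).1, (hmem hy).2]
    exact sub_nonneg.mpr (rpow_neg_anti h1 h2 hα.le)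
  set z₀ : E := EuclideanSpace.single (⟨0, hNpos⟩ : Fin N) (1:ℝ) with hz₀def
  have hz₀ : ‖z₀‖ = 1 := by rw [hz₀def, EuclideanSpace.norm_single]; norm_num
  have hz₀A : z₀ ∈ A := by
    constructor
    · rw [mem_closedBall_zero_iff, hz₀]; linarith
    · rw [Metric.mem_ball, dist_zero_right, hz₀]; linarith
  have hcont : ContinuousOn (fun y => ψ y / w y) A := by
    apply ContinuousOn.div
    · apply ContinuousOn.sub _ continuousOn_const
      intro y hy
      have h1 : (0:ℝ) < ‖y‖ ^ 2 := by nlinarith [(hmem hy).1]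
      have hcn : ContinuousAt (fun y : E => ‖y‖ ^ 2) y := (continuous_norm.pow 2).continuousAt
      have h4 : ContinuousAt (fun s : ℝ => s ^ (-α)) (‖y‖ ^ 2) :=
        Real.continuousAt_rpow_const _ _ (Or.inl h1.ne')
      exact (ContinuousAt.comp (x := y) h4 hcn).continuousWithinAt
    · exact hw.continuous.continuousOn
    · exact fun y _ => (hwpos y).ne'
  obtain ⟨x₀, hx₀A, hx₀max⟩ := hAC.exists_isMaxOn ⟨z₀, hz₀A⟩ hcont
  have hc₀lt : c₀ < 1 := by
    have := rpow_neg_anti_strict (α := α) one_pos (by nlinarith : (1:ℝ) < R ^ 2) hα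
    simpa [Real.one_rpow] using this
  have hc₀0 : 0 ≤ c₀ := Real.rpow_nonneg (by positivity) _
  have hψz₀ : ψ z₀ = 1 - c₀ := by
    rw [hψdef]; simp [hz₀, Real.one_rpow]
  have hρpos : 0 < ψ x₀ / w x₀ := by
    have h1 : ψ z₀ / w z₀ ≤ ψ x₀ / w x₀ := hx₀max hz₀A
    have h2 : 0 < ψ z₀ / w z₀ := div_pos (by rw [hψz₀]; linarith) (hwpos z₀)
    linarith
  have hψx₀ : 0 < ψ x₀ := by
    by_contra h
    push_neg at h
    have : ψ x₀ / w x₀ ≤ 0 := div_nonpos_iff.mpr (Or.inr ⟨h, (hwpos x₀).le⟩)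
    linarith
  have hx₀1 : 1 ≤ ‖x₀‖ := (hmem hx₀A).1
  have hx₀R : ‖x₀‖ < R := by
    rcases lt_or_eq_of_le (hmem hx₀A).2 with h | h
    · exact h
    · exfalso
      have : ψ x₀ = 0 := by rw [hψdef]; simp [h, hc₀]
      linarith
  have hx₀norm : ‖x₀‖ = 1 := by
    by_contra hne
    have hgt : 1 < ‖x₀‖ := lt_of_le_of_ne hx₀1 (Ne.symm hne)
    set U : Set E := Metric.ball 0 R \ Metric.closedBall 0 1 with hUdef
    have hUopen : IsOpen U := Metric.isOpen_ball.sdiff Metric.isClosed_closedBall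
    have hx₀U : x₀ ∈ U := by
      constructor
      · exact mem_ball_zero_iff.mpr hx₀R
      · rw [Metric.mem_closedBall, dist_zero_right]; linarith
    have hUA : U ⊆ A := by
      intro y hy
      constructor
      · exact Metric.ball_subset_closedBall hy.1
      · intro hball
        exact hy.2 (Metric.ball_subset_closedBall hball)
    have hAnhds : A ∈ nhds x₀ := Filter.mem_of_superset (hUopen.mem_nhds hx₀U) hUA
    have hx₀ne : x₀ ≠ 0 := by
      intro h
      rw [h, norm_zero] at hgt; linarith
    have htouch := touching hw.contDiffAt (barrier2_contDiffAt hx₀ne) hwpos hx₀max hAnhds hψx₀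
    rw [laplacian_barrier2 hx₀ne] at htouch
    have hpos : 0 < 2 * α * (2 * α + 2 - N) * (‖x₀‖ ^ 2) ^ (-α - 1) := by
      have h1 : (0:ℝ) < ‖x₀‖ ^ 2 := by nlinarith
      have h2 : (0:ℝ) < (‖x₀‖ ^ 2) ^ (-α - 1) := Real.rpow_pos_of_pos h1 _
      have h3 : (0:ℝ) < 2 * α + 2 - N := by linarith
      positivity
    have htpos : 0 < w x₀ / ψ x₀ := div_pos (hwpos x₀) hψx₀
    nlinarith [hlap x₀, mul_pos htpos hpos]
  -- conclusion
  intro x hx1 hxR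
  have hxA : x ∈ A := by
    constructor
    · exact mem_closedBall_zero_iff.mpr hxR
    · intro h
      exact absurd (mem_ball_zero_iff.mp h) (not_lt.mpr hx1)
  have h1 : ψ x / w x ≤ ψ x₀ / w x₀ := hx₀max hxA
  have h2 : ψ x * w x₀ ≤ ψ x₀ * w x :=
    (div_le_div_iff₀ (hwpos x) (hwpos x₀)).mp h1
  have hψx₀le : ψ x₀ ≤ 1 := by
    rw [hψdef]; simp [hx₀norm, Real.one_rpow]; linarith
  have hm : m ≤ w x₀ := hmin x₀ hx₀norm
  have h3 : m * ψ x ≤ ψ x * w x₀ := by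
    rw [mul_comm m (ψ x)]
    exact mul_le_mul_of_nonneg_left hm (hψ0 hxA)
  have h4 : ψ x₀ * w x ≤ w x := by
    nlinarith [hwpos x, hψx₀le, hψx₀]
  calc m * ((‖x‖ ^ 2) ^ (-α) - (R ^ 2) ^ (-α)) = m * ψ x := rfl
    _ ≤ ψ x * w x₀ := h3
    _ ≤ ψ x₀ * w x := h2
    _ ≤ w x := h4

set_option maxHeartbeats 1000000 in
lemma no_superharmonic_L2 (hN : N = 2 ∨ N = 3) {w : E → ℝ} (hw : ContDiff ℝ 2 w)
    (hwpos : ∀ x, 0 < w x) (hlap : ∀ x, laplacian w x < 0)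
    (hL2 : MemLp w 2 (volume : Measure (EuclideanSpace ℝ (Fin N)))) : False := by
  have hNpos : 0 < N := by rcases hN with h | h <;> omega
  set α : ℝ := (3 * (N:ℝ) - 4) / 8 with hαdef
  have hα0 : 0 < α := by
    rcases hN with h | h <;> (rw [hαdef, h] <;> norm_num)
  have hαN : (N:ℝ) < 2 * α + 2 := by
    rcases hN with h | h <;> (rw [hαdef, h] <;> norm_num)
  have hεpos : 0 < (N:ℝ) - 4 * α := by
    rcases hN with h | h <;> (rw [hαdef, h] <;> norm_num)
  set z₀ : E := EuclideanSpace.single (⟨0, hNpos⟩ : Fin N) (1:ℝ) with hz₀def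
  have hz₀ : ‖z₀‖ = 1 := by rw [hz₀def, EuclideanSpace.norm_single]; norm_num
  obtain ⟨z, hzs, hzmin⟩ := (isCompact_sphere (0:E) 1).exists_isMinOn
    ⟨z₀, by simpa [mem_sphere_zero_iff_norm] using hz₀⟩ hw.continuous.continuousOn
  set m := w z with hmdef
  have hm0 : 0 < m := hwpos z
  have hmin : ∀ y : E, ‖y‖ = 1 → m ≤ w y := fun y hy =>
    hzmin (mem_sphere_zero_iff_norm.mpr hy)
  have hInt : Integrable (fun x : E => w x ^ 2) volume :=
    (memLp_two_iff_integrable_sq hw.continuous.aestronglyMeasurable).mp hL2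
  set T := ∫ x : E, w x ^ 2 with hTdef
  set V := (volume : Measure E) (Metric.ball 0 1) with hVdef
  have hV0 : 0 < V := Metric.measure_ball_pos _ _ one_pos
  have hVtop : V < ⊤ := measure_ball_lt_top
  set vr := V.toReal with hvrdef
  have hvr0 : 0 < vr := ENNReal.toReal_pos hV0.ne' hVtop.ne
  set a₂ : ℝ := (2:ℝ) ^ ((2:ℝ) * (-α)) with ha₂def
  have ha₂lt1 : a₂ < 1 := by
    apply Real.rpow_lt_one_of_one_lt_of_neg one_lt_two
    nlinarith
  have ha₂0 : 0 < a₂ := Real.rpow_pos_of_pos two_pos _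
  have key : ∀ S : ℝ, 2 ≤ S →
      m ^ 2 * (1 - a₂) ^ 2 * (S ^ ((N:ℝ) - 4 * α) - 1) * vr ≤ T := by
    intro S hS
    have hS0 : (0:ℝ) < S := by linarith
    have hS1 : (1:ℝ) ≤ S := by linarith
    have hR : (1:ℝ) < S ^ 2 := by nlinarith
    set A1 : ℝ := S ^ ((2:ℝ) * (-α)) with hA1def
    set A2 : ℝ := S ^ ((4:ℝ) * (-α)) with hA2def
    have hA1pos : 0 < A1 := Real.rpow_pos_of_pos hS0 _
    have hA2pos : 0 < A2 := Real.rpow_pos_of_pos hS0 _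
    have hA1A2 : A1 * A1 = A2 := by
      rw [hA1def, hA2def, ← Real.rpow_add hS0]
      congr 1; ring
    have hrw1 : ((S ^ 2 : ℝ)) ^ (-α) = A1 := by
      rw [hA1def, Real.rpow_mul hS0.le]
      norm_num
    have hrw2 : (((S ^ 2 : ℝ)) ^ 2) ^ (-α) = A2 := by
      rw [hA2def, Real.rpow_mul hS0.le]
      rw [show ((S:ℝ) ^ (4:ℝ)) = (S ^ 2) ^ 2 by
        rw [← Real.rpow_natCast S 2, ← Real.rpow_natCast (S ^ ((2:ℕ):ℝ)) 2,
          ← Real.rpow_mul hS0.le]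
        norm_num]
    have hA2le1 : A2 ≤ 1 := by
      rw [hA2def]
      apply Real.rpow_le_one_of_one_le_of_nonpos hS1
      nlinarith
    have hA1a₂ : A1 ≤ a₂ := by
      rw [hA1def, ha₂def]
      have h1 : S ^ ((2:ℝ) * (-α)) = S ^ (-(2 * α)) := by congr 1; ring
      have h2 : (2:ℝ) ^ ((2:ℝ) * (-α)) = (2:ℝ) ^ (-(2 * α)) := by congr 1; ring
      rw [h1, h2]
      exact rpow_neg_anti two_pos hS (by nlinarith)
    set cS : ℝ := m * (A1 - A2) with hcSdef
    have hlow := lower_bound_annulus hNpos hw hwpos hlap hα0 hαN hmin hR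
    set Ann : Set E := Metric.closedBall 0 S \ Metric.ball 0 1 with hAnndef
    have hwAnn : ∀ x ∈ Ann, cS ≤ w x := by
      intro x hx
      have hx1 : 1 ≤ ‖x‖ := not_lt.mp (fun h => hx.2 (mem_ball_zero_iff.mpr h))
      have hxS : ‖x‖ ≤ S := mem_closedBall_zero_iff.mp hx.1
      have hxS2 : ‖x‖ ≤ S ^ 2 := by nlinarith
      have h1 := hlow x hx1 hxS2
      have h2 : ((S ^ 2 : ℝ)) ^ (-α) ≤ (‖x‖ ^ 2) ^ (-α) :=
        rpow_neg_anti (by nlinarith : (0:ℝ) < ‖x‖ ^ 2) (by nlinarith) hα0.le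
      rw [hrw2] at h1
      rw [hrw1] at h2
      calc cS = m * (A1 - A2) := rfl
        _ ≤ m * ((‖x‖ ^ 2) ^ (-α) - A2) := by nlinarith
        _ ≤ w x := h1
    have hcS0 : 0 ≤ cS := by
      have h6 : A2 ≤ A1 := by nlinarith
      rw [hcSdef]; nlinarith
    have hAnnMeas : MeasurableSet Ann := measurableSet_closedBall.diff measurableSet_ball
    have hAnnFin : (volume : Measure E) Ann ≠ ⊤ :=
      ((lt_of_le_of_lt (measure_mono Set.diff_subset) measure_closedBall_lt_top)).ne
    have hIb : cS ^ 2 * ((volume : Measure E) Ann).toReal ≤ ∫ x in Ann, w x ^ 2 := by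
      apply setIntegral_ge_of_const_le_real hAnnMeas hAnnFin
      · intro x hx
        exact pow_le_pow_left₀ hcS0 (hwAnn x hx) 2
      · exact hInt.integrableOn
    have hIb2 : ∫ x in Ann, w x ^ 2 ≤ T :=
      setIntegral_le_integral hInt (Filter.Eventually.of_forall (fun x => by positivity))
    have hSN1 : (1:ℝ) ≤ S ^ N := by
      calc (1:ℝ) = 1 ^ N := (one_pow N).symm
        _ ≤ S ^ N := pow_le_pow_left₀ (by norm_num) hS1 N
    have hsub : Metric.ball (0:E) 1 ⊆ Metric.closedBall 0 S :=
      Set.Subset.trans Metric.ball_subset_closedBall (Metric.closedBall_subset_closedBall hS1)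
    have hcb : (volume : Measure E) (Metric.closedBall 0 S)
        = ENNReal.ofReal (S ^ N) * V := by
      rw [Measure.addHaar_closedBall _ _ hS0.le, finrank_euclideanSpace_fin]
    have hvolAnn : ((volume : Measure E) Ann).toReal = S ^ N * vr - vr := by
      rw [hAnndef, measure_diff hsub measurableSet_ball.nullMeasurableSet
        measure_ball_lt_top.ne]
      have hle : V ≤ (volume : Measure E) (Metric.closedBall 0 S) := by
        rw [hcb]
        calc V = 1 * V := (one_mul V).symm
          _ ≤ ENNReal.ofReal (S ^ N) * V := by
              apply mul_le_mul_left
              rw [show (1:ENNReal) = ENNReal.ofReal 1 by simp]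
              exact ENNReal.ofReal_le_ofReal hSN1
      rw [ENNReal.toReal_sub_of_le hle
        (by rw [hcb]; exact ENNReal.mul_ne_top ENNReal.ofReal_ne_top hVtop.ne)]
      rw [hcb, ENNReal.toReal_mul, ENNReal.toReal_ofReal (by positivity)]
    rw [hvolAnn] at hIb
    have h5 : cS ^ 2 * (S ^ N * vr - vr) ≤ T := le_trans hIb hIb2
    set SN : ℝ := S ^ ((N:ℝ)) with hSNdef
    set Sε : ℝ := S ^ ((N:ℝ) - 4 * α) with hSεdef
    have hSNnat : (S:ℝ) ^ (N:ℕ) = SN := by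
      rw [hSNdef, Real.rpow_natCast]
    have hSNA2 : SN * A2 = Sε := by
      rw [hSNdef, hA2def, hSεdef, ← Real.rpow_add hS0]
      congr 1; ring
    have e1 : m * ((1 - a₂) * A1) ≤ cS := by
      rw [hcSdef]
      have h6 : A1 * (1 - a₂) ≤ A1 - A2 := by nlinarith [hA1pos, hA1a₂, hA1A2]
      nlinarith [hm0]
    have e2 : (m * ((1 - a₂) * A1)) ^ 2 ≤ cS ^ 2 := by
      have h1a₂ : 0 < 1 - a₂ := by linarith
      exact pow_le_pow_left₀ (by positivity) e1 2
    have e3 : (m * ((1 - a₂) * A1)) ^ 2 = m ^ 2 * (1 - a₂) ^ 2 * A2 := by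
      rw [← hA1A2]; ring
    have q2 : m ^ 2 * (1 - a₂) ^ 2 * A2 ≤ cS ^ 2 := by rw [← e3]; exact e2
    have e4 : A2 * (S ^ N - 1) = Sε - A2 := by
      rw [mul_sub, mul_one, hSNnat, mul_comm A2 SN, hSNA2]
    have step1 : Sε - 1 ≤ A2 * (S ^ N - 1) := by
      rw [e4]; linarith
    have h1a₂ : 0 < 1 - a₂ := by linarith
    have step2 : m ^ 2 * (1 - a₂) ^ 2 * (Sε - 1) * vr
        ≤ m ^ 2 * (1 - a₂) ^ 2 * (A2 * (S ^ N - 1)) * vr := by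
      apply mul_le_mul_of_nonneg_right _ hvr0.le
      exact mul_le_mul_of_nonneg_left step1 (by positivity)
    have step3 : m ^ 2 * (1 - a₂) ^ 2 * (A2 * (S ^ N - 1)) * vr
        = (m ^ 2 * (1 - a₂) ^ 2 * A2) * ((S ^ N - 1) * vr) := by ring
    have step4 : (m ^ 2 * (1 - a₂) ^ 2 * A2) * ((S ^ N - 1) * vr)
        ≤ cS ^ 2 * ((S ^ N - 1) * vr) := by
      apply mul_le_mul_of_nonneg_right q2
      have h7 : (0:ℝ) ≤ S ^ N - 1 := by linarith
      positivity
    have step5 : cS ^ 2 * ((S ^ N - 1) * vr) = cS ^ 2 * (S ^ N * vr - vr) := by ring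
    linarith
  have h1a₂ : 0 < 1 - a₂ := by linarith
  set K : ℝ := m ^ 2 * (1 - a₂) ^ 2 * vr with hKdef
  have hKpos : 0 < K := by positivity
  have htend := tendsto_rpow_atTop hεpos
  have hev : ∀ᶠ S in Filter.atTop, (T + 1) / K + 1 < S ^ ((N:ℝ) - 4 * α) :=
    htend.eventually_gt_atTop _
  obtain ⟨S, hSb, hS2⟩ := (hev.and (Filter.eventually_ge_atTop 2)).exists
  have hkey := key S hS2
  have h7 : (T + 1) / K < S ^ ((N:ℝ) - 4 * α) - 1 := by linarith
  have h8 : T + 1 < (S ^ ((N:ℝ) - 4 * α) - 1) * K := (div_lt_iff₀ hKpos).mp h7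
  have h9 : (S ^ ((N:ℝ) - 4 * α) - 1) * K
      = m ^ 2 * (1 - a₂) ^ 2 * (S ^ ((N:ℝ) - 4 * α) - 1) * vr := by rw [hKdef]; ring
  linarith

lemma laplacian_neg (u : E → ℝ) (x : E) :
    laplacian (fun y => -u y) x = -laplacian u x := by
  unfold laplacian
  rw [← Finset.sum_neg_distrib]
  refine Finset.sum_congr rfl fun i _ => ?_
  have h : iteratedFDeriv ℝ 2 (-u) x = -iteratedFDeriv ℝ 2 u x :=
    iteratedFDeriv_neg_apply
  have h2 : (fun y => -u y) = -u := rfl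
  rw [h2, h]
  simp

lemma amgm {μ₁ μ₂ : ℝ} (hμ₁ : 0 < μ₁) (hμ₁₂ : μ₁ ≤ μ₂) {a b : ℝ} (ha : 0 < a) (hb : 0 < b) :
    (μ₁ ^ 2 * μ₂) ^ ((1:ℝ)/3) * (a ^ 2 * b + a * b ^ 2) ≤ μ₁ * a ^ 3 + μ₂ * b ^ 3 := by
  have hμ₂ : 0 < μ₂ := lt_of_lt_of_le hμ₁ hμ₁₂
  set p : ℝ := μ₁ ^ ((1:ℝ)/3) with hpdef
  set q : ℝ := μ₂ ^ ((1:ℝ)/3) with hqdef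
  have hp : 0 < p := Real.rpow_pos_of_pos hμ₁ _
  have hq : 0 < q := Real.rpow_pos_of_pos hμ₂ _
  have hpq : p ≤ q := Real.rpow_le_rpow hμ₁.le hμ₁₂ (by norm_num)
  have hp3 : p ^ (3:ℕ) = μ₁ := by
    rw [hpdef, ← Real.rpow_natCast (μ₁ ^ ((1:ℝ)/3)) 3, ← Real.rpow_mul hμ₁.le]
    norm_num
  have hq3 : q ^ (3:ℕ) = μ₂ := by
    rw [hqdef, ← Real.rpow_natCast (μ₂ ^ ((1:ℝ)/3)) 3, ← Real.rpow_mul hμ₂.le]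
    norm_num
  have hγ : (μ₁ ^ 2 * μ₂) ^ ((1:ℝ)/3) = p ^ 2 * q := by
    rw [Real.mul_rpow (by positivity) hμ₂.le]
    congr 1
    rw [← Real.rpow_natCast μ₁ 2, ← Real.rpow_mul hμ₁.le, hpdef,
      ← Real.rpow_natCast (μ₁ ^ ((1:ℝ)/3)) 2, ← Real.rpow_mul hμ₁.le]
    norm_num
  rw [hγ, ← hp3, ← hq3]
  nlinarith [mul_nonneg (mul_nonneg hq.le (add_pos (mul_pos hp ha) (mul_pos hq hb)).le)
      (sq_nonneg (p * a - q * b)),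
    mul_nonneg (mul_nonneg (sub_nonneg.mpr hpq) (mul_pos hp ha).le) (sq_nonneg (q * b)),
    mul_pos hp ha, mul_pos hq hb]

lemma key_case (hN : N = 2 ∨ N = 3) (μ₁ μ₂ κ β : ℝ) (hμ₁ : 0 < μ₁) (hμ₁₂ : μ₁ ≤ μ₂)
    (hcase : (1 < κ ∧ -((μ₁ ^ 2 * μ₂) ^ ((1 : ℝ) / 3)) ≤ β) ∨ (κ = 1 ∧ 0 < β))
    (u v : E → ℝ) (hu : ContDiff ℝ 2 u) (hv : ContDiff ℝ 2 v)
    (hu2 : MemLp u 2 (volume : Measure (EuclideanSpace ℝ (Fin N))))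
    (hv2 : MemLp v 2 (volume : Measure (EuclideanSpace ℝ (Fin N))))
    (heq1 : ∀ x, -laplacian u x + u x = μ₁ * u x ^ 3 + β * u x * v x ^ 2 - κ * v x)
    (heq2 : ∀ x, -laplacian v x + v x = μ₂ * v x ^ 3 + β * u x ^ 2 * v x - κ * u x)
    (hsign : ∀ x, 0 < u x ∧ v x < 0) : False := by
  set w : E → ℝ := fun x => u x - v x with hwdef
  have hwC : ContDiff ℝ 2 w := hu.sub hv
  have hwpos : ∀ x, 0 < w x := fun x => by
    have := (hsign x).1; have := (hsign x).2
    simp only [hwdef]; linarith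
  have hlapw : ∀ x, laplacian w x = laplacian u x - laplacian v x := by
    intro x
    have h1 : w = fun y => u y - 1 * v y := by funext y; rw [hwdef]; ring
    rw [h1, laplacian_smul_sub 1 hu.contDiffAt hv.contDiffAt, one_mul]
  have hmain : ∀ x, -laplacian w x
      = (κ - 1) * w x + (μ₁ * u x ^ 3 - μ₂ * v x ^ 3 - β * u x * v x * (u x - v x)) := by
    intro x
    rw [hlapw x]
    have e1 := heq1 x
    have e2 := heq2 x
    simp only [hwdef]
    linear_combination e1 - e2
  have hGform : ∀ x, μ₁ * u x ^ 3 - μ₂ * v x ^ 3 - β * u x * v x * (u x - v x)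
      = μ₁ * (u x) ^ 3 + μ₂ * (-v x) ^ 3 + β * ((u x) ^ 2 * (-v x) + u x * (-v x) ^ 2) := by
    intro x; ring
  rcases hcase with ⟨hκ, hβ⟩ | ⟨hκ, hβ⟩
  · -- κ > 1
    have hsup : ∀ x, (κ - 1) * w x ≤ -laplacian w x := by
      intro x
      rw [hmain x]
      have hβ2 := amgm hμ₁ hμ₁₂ (hsign x).1 (neg_pos.mpr (hsign x).2)
      have hab : 0 ≤ (u x) ^ 2 * (-v x) + u x * (-v x) ^ 2 := by
        have := (hsign x).1; have := neg_pos.mpr (hsign x).2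
        positivity
      have hG : 0 ≤ μ₁ * u x ^ 3 - μ₂ * v x ^ 3 - β * u x * v x * (u x - v x) := by
        rw [hGform x]
        nlinarith [hβ2, mul_le_mul_of_nonneg_right hβ hab]
      linarith
    exact no_supersolution (by linarith : (0:ℝ) < κ - 1) hwC hwpos hsup
  · -- κ = 1
    have hlapneg : ∀ x, laplacian w x < 0 := by
      intro x
      have := hmain x
      rw [hκ] at this
      have hG : 0 < μ₁ * u x ^ 3 - μ₂ * v x ^ 3 - β * u x * v x * (u x - v x) := by
        rw [hGform x]
        have h1 := (hsign x).1
        have h2 := neg_pos.mpr (hsign x).2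
        have hμ₂ : 0 < μ₂ := lt_of_lt_of_le hμ₁ hμ₁₂
        positivity
      linarith [this]
    have hw2 : MemLp w 2 (volume : Measure (EuclideanSpace ℝ (Fin N))) := hu2.sub hv2
    exact no_superharmonic_L2 hN hwC hwpos hlapneg hw2

theorem stmt2 (N : ℕ) (hN : N = 2 ∨ N = 3) (μ₁ μ₂ κ β : ℝ)
    (hμ₁ : 0 < μ₁) (hμ₁₂ : μ₁ ≤ μ₂)
    (hcase : (1 < κ ∧ -((μ₁ ^ 2 * μ₂) ^ ((1 : ℝ) / 3)) ≤ β) ∨ (κ = 1 ∧ 0 < β)) :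
    ¬ ∃ u v : EuclideanSpace ℝ (Fin N) → ℝ,
      ContDiff ℝ 2 u ∧ ContDiff ℝ 2 v ∧
      MemLp u 2 (volume : Measure (EuclideanSpace ℝ (Fin N))) ∧
      MemLp v 2 (volume : Measure (EuclideanSpace ℝ (Fin N))) ∧
      MemLp (fun x => gradient u x) 2 (volume : Measure (EuclideanSpace ℝ (Fin N))) ∧
      MemLp (fun x => gradient v x) 2 (volume : Measure (EuclideanSpace ℝ (Fin N))) ∧
      (∀ x, -laplacian u x + u x = μ₁ * u x ^ 3 + β * u x * v x ^ 2 - κ * v x) ∧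
      (∀ x, -laplacian v x + v x = μ₂ * v x ^ 3 + β * u x ^ 2 * v x - κ * u x) ∧
      ((∀ x, 0 < u x ∧ v x < 0) ∨ (∀ x, u x < 0 ∧ 0 < v x)) := by
  rintro ⟨u, v, hu, hv, hu2, hv2, -, -, heq1, heq2, hsign⟩
  rcases hsign with hs | hs
  · exact key_case hN μ₁ μ₂ κ β hμ₁ hμ₁₂ hcase u v hu hv hu2 hv2 heq1 heq2 hs
  · refine key_case hN μ₁ μ₂ κ β hμ₁ hμ₁₂ hcase (fun x => -u x) (fun x => -v x)
      hu.neg hv.neg hu2.neg hv2.neg ?_ ?_ ?_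
    · intro x
      rw [laplacian_neg u x]
      linear_combination (-1 : ℝ) * heq1 x
    · intro x
      rw [laplacian_neg v x]
      linear_combination (-1 : ℝ) * heq2 x
    · intro x
      exact ⟨neg_pos.mpr (hs x).1, neg_lt_zero.mpr (hs x).2⟩
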